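/- For 1 < ρ < 2, α ∈ ℂ with Re(α) > 0, and integer k > Re(α), the integral ∫₁^ρ (z-1)^α z^(-k-1) dz equals Γ(k-α)Γ(α+1)/Γ(k+1) + O(ρ^(-k)) as k → ∞, where powers take principal values. -/

import Mathlib

open Complex MeasureTheory

namespace WBaux

lemma pointwise_eq (α : ℂ) (k : ℕ) {t : ℝ} (h0 : 0 < t) (h1 : t ≤ 1) :
    ((t ^ 2)⁻¹ : ℝ) • (((t⁻¹ - 1 : ℝ) : ℂ) ^ α * ((t⁻¹ : ℝ) : ℂ) ^ (-(k : ℂ) - 1)) =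
      (t : ℂ) ^ ((k : ℂ) - α - 1) * (1 - (t : ℂ)) ^ α := by
  have ht0 : (t : ℂ) ≠ 0 := ofReal_ne_zero.mpr h0.ne'
  have h1t : (0:ℝ) ≤ 1 - t := by linarith
  have e1 : (t⁻¹ - 1 : ℝ) = (1 - t) * t⁻¹ := by field_simp
  have harg : (t : ℂ).arg ≠ Real.pi := by
    rw [Complex.arg_ofReal_of_nonneg h0.le]
    exact Real.pi_ne_zero.symm
  have e3 : ∀ w : ℂ, ((t⁻¹ : ℝ) : ℂ) ^ w = (t : ℂ) ^ (-w) := by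
    intro w
    rw [ofReal_inv, Complex.inv_cpow _ _ harg, ← Complex.cpow_neg]
  have e2 : ((t⁻¹ - 1 : ℝ) : ℂ) ^ α = ((1 - t : ℝ) : ℂ) ^ α * (t : ℂ) ^ (-α) := by
    rw [e1, ofReal_mul, Complex.mul_cpow_ofReal_nonneg h1t (inv_nonneg.mpr h0.le), e3]
  have e4 : (((t ^ 2)⁻¹ : ℝ) : ℂ) = (t : ℂ) ^ (-2 : ℂ) := by
    rw [show ((-2:ℂ)) = -((2:ℕ):ℂ) by norm_num, Complex.cpow_neg, Complex.cpow_natCast,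
      ofReal_inv, ofReal_pow]
  have key : (t:ℂ) ^ ((k:ℂ) - α - 1) = (t:ℂ) ^ (-2:ℂ) * ((t:ℂ) ^ (-α) * (t:ℂ) ^ (-(-(k:ℂ)-1))) := by
    rw [← Complex.cpow_add _ _ ht0, ← Complex.cpow_add _ _ ht0]
    congr 1
    ring
  rw [Complex.real_smul, e2, e3, key, e4]
  push_cast
  ring

lemma subst (ρ : ℝ) (hρ1 : 1 < ρ) (α : ℂ) (hα : 0 < α.re) (k : ℕ) :
    (∫ z in (1:ℝ)..ρ, ((z : ℂ) - 1) ^ α * (z : ℂ) ^ (-(k : ℂ) - 1)) =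
      ∫ t in (ρ⁻¹:ℝ)..1, (t : ℂ) ^ ((k : ℂ) - α - 1) * (1 - (t : ℂ)) ^ α := by
  have hρ0 : (0:ℝ) < ρ := lt_trans one_pos hρ1
  have hinv0 : (0:ℝ) < ρ⁻¹ := inv_pos.mpr hρ0
  have hinv1 : ρ⁻¹ < 1 := by
    rw [inv_lt_one_iff₀]; right; exact hρ1
  set g : ℝ → ℂ := fun z => ((z - 1 : ℝ) : ℂ) ^ α * ((z : ℝ) : ℂ) ^ (-(k : ℂ) - 1) with hgdef
  have hg : ContinuousOn g (Set.Ici 1) := by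
    intro z hz
    have hz0 : (0:ℝ) < z := lt_of_lt_of_le one_pos hz
    have c1 : Continuous fun z : ℝ => ((z - 1 : ℝ) : ℂ) ^ α :=
      (Complex.continuous_ofReal_cpow_const hα).comp (continuous_id.sub continuous_const)
    have c2 : ContinuousAt (fun z : ℝ => ((z : ℝ) : ℂ) ^ (-(k : ℂ) - 1)) z := by
      exact (continuousAt_cpow_const
        (Complex.mem_slitPlane_iff.mpr (Or.inl (by simpa)))).comp
        Complex.continuous_ofReal.continuousAt
    exact (c1.continuousAt.mul c2).continuousWithinAt
  have huIcc : Set.uIcc (1:ℝ) ρ⁻¹ = Set.Icc ρ⁻¹ 1 := Set.uIcc_of_ge hinv1.le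
  have hder : ∀ t ∈ Set.uIcc (1:ℝ) ρ⁻¹, HasDerivAt (fun t : ℝ => t⁻¹) (-(t^2)⁻¹) t := by
    intro t ht
    rw [huIcc] at ht
    exact hasDerivAt_inv (lt_of_lt_of_le hinv0 ht.1).ne'
  have hcf' : ContinuousOn (fun t : ℝ => -(t^2)⁻¹) (Set.uIcc (1:ℝ) ρ⁻¹) := by
    rw [huIcc]
    refine (ContinuousOn.inv₀ (continuous_pow 2).continuousOn ?_).neg
    intro t ht
    exact pow_ne_zero _ (lt_of_lt_of_le hinv0 ht.1).ne'
  have himg : (fun t : ℝ => t⁻¹) '' Set.uIcc 1 ρ⁻¹ ⊆ Set.Ici 1 := by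
    rintro _ ⟨t, ht, rfl⟩
    rw [huIcc] at ht
    exact Set.mem_Ici.mpr ((one_le_inv_iff₀.mpr ⟨lt_of_lt_of_le hinv0 ht.1, ht.2⟩))
  have hsub := intervalIntegral.integral_comp_smul_deriv' hder hcf' (hg.mono himg)
  simp only [inv_inv, inv_one] at hsub
  have step1 : (∫ z in (1:ℝ)..ρ, ((z : ℂ) - 1) ^ α * (z : ℂ) ^ (-(k : ℂ) - 1)) =
      ∫ z in (1:ℝ)..ρ, g z := by
    refine intervalIntegral.integral_congr fun z _ => ?_
    simp only [hgdef, ofReal_sub, ofReal_one]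
  rw [step1, ← hsub, intervalIntegral.integral_symm, ← intervalIntegral.integral_neg]
  refine intervalIntegral.integral_congr fun t ht => ?_
  rw [Set.uIcc_of_le hinv1.le] at ht
  have h0 : 0 < t := lt_of_lt_of_le hinv0 ht.1
  rw [← pointwise_eq α k h0 ht.2]
  simp only [Function.comp, hgdef, neg_smul, neg_neg]

end WBaux

/-- Lemma 3 (first part) of Williams–Batic: for `1 < ρ < 2`, `Re α > 0` and integers
`k > Re α`, `∫₁^ρ (z-1)^α z^(-k-1) dz = Γ(k-α)Γ(α+1)/Γ(k+1) + O(ρ^(-k))` as `k → ∞`. -/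
theorem stmt0 (ρ : ℝ) (hρ1 : 1 < ρ) (hρ2 : ρ < 2) (α : ℂ) (hα : 0 < α.re) :
    ∃ C : ℝ, ∀ k : ℕ, α.re < (k : ℝ) →
      ‖(∫ z in (1:ℝ)..ρ, ((z : ℂ) - 1) ^ α * (z : ℂ) ^ (-(k : ℂ) - 1)) -
        Complex.Gamma ((k : ℂ) - α) * Complex.Gamma (α + 1) / Complex.Gamma ((k : ℂ) + 1)‖
      ≤ C * ρ ^ (-(k : ℝ)) := by
  have hρ0 : (0:ℝ) < ρ := lt_trans one_pos hρ1
  have hinv0 : (0:ℝ) < ρ⁻¹ := inv_pos.mpr hρ0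
  have hinv1 : ρ⁻¹ < 1 := by rw [inv_lt_one_iff₀]; right; exact hρ1
  set δ : ℝ := (⌊α.re⌋ : ℝ) + 1 - α.re with hδdef
  have hδ : 0 < δ := by
    have := Int.lt_floor_add_one α.re
    simp only [hδdef]; linarith
  refine ⟨ρ ^ α.re / δ, fun k hk => ?_⟩
  set h : ℝ → ℂ := fun t => (t : ℂ) ^ ((k : ℂ) - α - 1) * (1 - (t : ℂ)) ^ α with hhdef
  have hk' : (0:ℝ) < (k:ℝ) - α.re := by linarith
  have hδk : δ ≤ (k:ℝ) - α.re := by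
    have h1 : ⌊α.re⌋ < (k:ℤ) := Int.floor_lt.mpr (by exact_mod_cast hk)
    have h2 : (⌊α.re⌋:ℝ) + 1 ≤ (k:ℝ) := by exact_mod_cast Int.add_one_le_of_lt h1
    simp only [hδdef]; linarith
  have hu : 0 < ((k:ℂ) - α).re := by
    simp only [Complex.sub_re, Complex.natCast_re]; linarith
  have hv : 0 < (α + 1).re := by
    simp only [Complex.add_re, Complex.one_re]; linarith
  have hG : Complex.Gamma ((k:ℂ) - α) * Complex.Gamma (α + 1) / Complex.Gamma ((k:ℂ) + 1)
      = Complex.betaIntegral ((k:ℂ) - α) (α + 1) := by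
    rw [Complex.Gamma_mul_Gamma_eq_betaIntegral hu hv,
      show (k:ℂ) - α + (α + 1) = (k:ℂ) + 1 by ring, mul_div_cancel_left₀]
    refine Complex.Gamma_ne_zero_of_re_pos ?_
    simp only [Complex.add_re, Complex.natCast_re, Complex.one_re]
    positivity
  have hbeta : Complex.betaIntegral ((k:ℂ) - α) (α + 1) = ∫ t in (0:ℝ)..1, h t := by
    simp only [Complex.betaIntegral, hhdef, add_sub_cancel_right]
  have hint : IntervalIntegrable h volume 0 1 := by
    have := Complex.betaIntegral_convergent hu hv
    simpa only [add_sub_cancel_right] using this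
  have hI1 : IntervalIntegrable h volume 0 ρ⁻¹ :=
    hint.mono_set (by
      rw [Set.uIcc_of_le hinv0.le, Set.uIcc_of_le zero_le_one]
      exact Set.Icc_subset_Icc le_rfl hinv1.le)
  have hI2 : IntervalIntegrable h volume ρ⁻¹ 1 :=
    hint.mono_set (by
      rw [Set.uIcc_of_le hinv1.le, Set.uIcc_of_le zero_le_one]
      exact Set.Icc_subset_Icc hinv0.le le_rfl)
  have hsplit : (∫ t in (0:ℝ)..1, h t) = (∫ t in (0:ℝ)..ρ⁻¹, h t) + ∫ t in ρ⁻¹..(1:ℝ), h t :=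
    (intervalIntegral.integral_add_adjacent_intervals hI1 hI2).symm
  rw [WBaux.subst ρ hρ1 α hα k, hG, hbeta, hsplit]
  have : (∫ t in ρ⁻¹..(1:ℝ), h t) -
      ((∫ t in (0:ℝ)..ρ⁻¹, h t) + ∫ t in ρ⁻¹..(1:ℝ), h t) = -(∫ t in (0:ℝ)..ρ⁻¹, h t) := by
    ring
  rw [this, norm_neg]
  set r : ℝ := (k:ℝ) - α.re - 1 with hrdef
  have hrgt : (-1:ℝ) < r := by simp only [hrdef]; linarith
  have step1 : ‖∫ t in (0:ℝ)..ρ⁻¹, h t‖ ≤ ∫ t in (0:ℝ)..ρ⁻¹, ‖h t‖ :=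
    intervalIntegral.norm_integral_le_integral_norm hinv0.le
  have step2 : (∫ t in (0:ℝ)..ρ⁻¹, ‖h t‖) ≤ ∫ t in (0:ℝ)..ρ⁻¹, t ^ r := by
    rw [intervalIntegral.integral_of_le hinv0.le, intervalIntegral.integral_of_le hinv0.le]
    refine setIntegral_mono_on hI1.norm.1 (intervalIntegral.intervalIntegrable_rpow' hrgt).1
      measurableSet_Ioc ?_
    intro t ht
    have h0 : 0 < t := ht.1
    have h1 : t < 1 := lt_of_le_of_lt ht.2 hinv1
    have h1t : (0:ℝ) < 1 - t := by linarith
    have e1 : ‖h t‖ = t ^ r * (1 - t) ^ α.re := by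
      rw [hhdef]
      simp only [norm_mul]
      rw [show (1 - (t:ℂ)) = ((1 - t : ℝ) : ℂ) by push_cast; ring]
      rw [Complex.norm_cpow_eq_rpow_re_of_pos h0, Complex.norm_cpow_eq_rpow_re_of_pos h1t]
      have : ((k:ℂ) - α - 1).re = r := by
        simp [hrdef, Complex.sub_re, Complex.natCast_re, Complex.one_re]
      rw [this]
    rw [e1]
    have : (1 - t) ^ α.re ≤ 1 := Real.rpow_le_one h1t.le (by linarith) hα.le
    nlinarith [Real.rpow_nonneg h0.le r]
  have hr1 : r + 1 = (k:ℝ) - α.re := by simp only [hrdef]; ring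
  have step3 : (∫ t in (0:ℝ)..ρ⁻¹, t ^ r) = (ρ⁻¹) ^ ((k:ℝ) - α.re) / ((k:ℝ) - α.re) := by
    rw [integral_rpow (Or.inl hrgt), hr1, Real.zero_rpow hk'.ne', sub_zero]
  have step4 : (ρ⁻¹) ^ ((k:ℝ) - α.re) / ((k:ℝ) - α.re) ≤ (ρ ^ α.re / δ) * ρ ^ (-(k:ℝ)) := by
    have e : (ρ⁻¹) ^ ((k:ℝ) - α.re) = ρ ^ α.re * ρ ^ (-(k:ℝ)) := by
      rw [Real.inv_rpow hρ0.le, ← Real.rpow_neg hρ0.le,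
        show -((k:ℝ) - α.re) = α.re + -(k:ℝ) by ring, Real.rpow_add hρ0]
    rw [e, div_mul_eq_mul_div]
    gcongr
  calc ‖∫ t in (0:ℝ)..ρ⁻¹, h t‖ ≤ ∫ t in (0:ℝ)..ρ⁻¹, ‖h t‖ := step1
    _ ≤ ∫ t in (0:ℝ)..ρ⁻¹, t ^ r := step2
    _ = (ρ⁻¹) ^ ((k:ℝ) - α.re) / ((k:ℝ) - α.re) := step3
    _ ≤ (ρ ^ α.re / δ) * ρ ^ (-(k:ℝ)) := step4
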